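/- Let $n,r,k,t$ be positive integers with $n\ge r\ge t+1$ and $k\ge2$. Suppose $\mathcal{F}\subset\mathcal{L}_{n,r,k}$ is a maximal $t$-intersecting family with $\tau_t(\mathcal{F})=t+1$. Let $\mathcal{T}$ be the set of all $t$-covers of $\mathcal{F}$ of size $t+1$, and suppose $\tau_t(\mathcal{T})=t+1$. Then $M=\bigcup_{T\in\mathcal{T}}T$ is a $k$-signed $(t+2)$-set on $[n]$, and every $F\in\mathcal{F}$ satisfies $|F\cap M|\ge t+1$. -/

import Mathlib

open Finset

attribute [local instance] Classical.propDecidable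

/-- The ground set `[n] × [k]`. -/
def box (n k : ℕ) : Finset (ℕ × ℕ) := Finset.Icc 1 n ×ˢ Finset.Icc 1 k

/-- A `k`-signed set on `[n]`: a subset of `[n] × [k]` with pairwise distinct first coordinates. -/
def IsSigned (n k : ℕ) (T : Finset (ℕ × ℕ)) : Prop :=
  T ⊆ box n k ∧ (T.image Prod.fst).card = T.card

/-- `L n r k`: the collection of `k`-signed `r`-sets on `[n]`. -/
def L (n r k : ℕ) : Finset (Finset (ℕ × ℕ)) :=
  (box n k).powerset.filter (fun F => F.card = r ∧ (F.image Prod.fst).card = r)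

/-- A family is `t`-intersecting if any two members meet in at least `t` elements. -/
def IsTIntersecting (t : ℕ) (F : Finset (Finset (ℕ × ℕ))) : Prop :=
  ∀ A ∈ F, ∀ B ∈ F, t ≤ (A ∩ B).card

/-- `T` is a `t`-cover of the family `F`: a `k`-signed set meeting every member in ≥ `t` points. -/
def IsTCover (n k t : ℕ) (F : Finset (Finset (ℕ × ℕ))) (T : Finset (ℕ × ℕ)) : Prop :=
  IsSigned n k T ∧ ∀ A ∈ F, t ≤ (T ∩ A).card

/-- `F` is a maximal `t`-intersecting subfamily of `L n r k`. -/
def IsMaximalTIntersecting (n r k t : ℕ) (F : Finset (Finset (ℕ × ℕ))) : Prop :=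
  F ⊆ L n r k ∧ IsTIntersecting t F ∧
    ∀ G ⊆ L n r k, IsTIntersecting t G → F ⊆ G → G = F

/-- A `t`-intersecting family is trivial if all members contain a fixed `k`-signed `t`-set. -/
def IsTrivial (n k t : ℕ) (F : Finset (Finset (ℕ × ℕ))) : Prop :=
  ∃ T, IsSigned n k T ∧ T.card = t ∧ ∀ A ∈ F, T ⊆ A

/-- `Msig d = {(1,1),(2,1),…,(d,1)}`. -/
def Msig (d : ℕ) : Finset (ℕ × ℕ) := (Finset.Icc 1 d).image (fun x => (x, 1))

/-- The family `H₁(n,r,k,ℓ,t)`. -/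
def H1 (n r k l t : ℕ) : Finset (Finset (ℕ × ℕ)) :=
  (L n r k).filter (fun F =>
    (Msig t ⊆ F ∧ t + 1 ≤ (F ∩ Msig l).card) ∨
    (¬ Msig t ⊆ F ∧ (F ∩ Msig l).card = l - 1))

/-- The family `H₂(n,r,k,c,t)`. -/
def H2 (n r k c t : ℕ) : Finset (Finset (ℕ × ℕ)) :=
  (L n r k).filter (fun F =>
    (Msig t ⊆ F ∧ t + 1 ≤ (F ∩ Msig r).card) ∨
    (F ∩ Msig r = Msig t ∧ Msig c \ Msig r ⊆ F) ∨
    (¬ Msig t ⊆ F ∧ (F ∩ Msig r).card = r - 1 ∧ (F ∩ (Msig c \ Msig r)).card = 1))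

/-- The set of all `t`-covers of `F` of size `t+1`. -/
noncomputable def TauSet (n k t : ℕ) (F : Finset (Finset (ℕ × ℕ))) : Finset (Finset (ℕ × ℕ)) :=
  (box n k).powerset.filter (fun T => IsTCover n k t F T ∧ T.card = t + 1)

section Aux

lemma mem_L_iff {n r k : ℕ} {A : Finset (ℕ × ℕ)} :
    A ∈ L n r k ↔ A ⊆ box n k ∧ A.card = r ∧ (A.image Prod.fst).card = r := by
  simp [L, Finset.mem_filter, Finset.mem_powerset, and_assoc]

lemma signed_subset {n k : ℕ} {T S : Finset (ℕ × ℕ)} (hT : IsSigned n k T) (hS : S ⊆ T) :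
    IsSigned n k S :=
  ⟨hS.trans hT.1, Finset.card_image_iff.mpr
    ((Finset.card_image_iff.mp hT.2).mono (Finset.coe_subset.mpr hS))⟩

lemma mem_TauSet_iff {n k t : ℕ} {F : Finset (Finset (ℕ × ℕ))} {T : Finset (ℕ × ℕ)} :
    T ∈ TauSet n k t F ↔ IsTCover n k t F T ∧ T.card = t + 1 := by
  constructor
  · intro h
    exact (Finset.mem_filter.mp h).2
  · intro h
    exact Finset.mem_filter.mpr ⟨Finset.mem_powerset.mpr h.1.1.1, h⟩

/-- Extension lemma: any signed `(t+1)`-set `T2` extends to a signed `r`-set avoiding a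
given signed set `T1` outside of `T2`. -/
lemma exists_ext (n r k t : ℕ) (hk : 2 ≤ k) (htr : t + 1 ≤ r) (hrn : r ≤ n)
    (T1 T2 : Finset (ℕ × ℕ)) (h1 : IsSigned n k T1) (h2 : IsSigned n k T2)
    (hc2 : T2.card = t + 1) :
    ∃ A ∈ L n r k, T2 ⊆ A ∧ A ∩ T1 ⊆ T2 := by
  classical
  set P : Finset ℕ := T2.image Prod.fst with hP
  have hPsub : P ⊆ Finset.Icc 1 n := by
    intro x hx
    obtain ⟨p, hp, rfl⟩ := Finset.mem_image.mp hx
    exact (Finset.mem_product.mp (h2.1 hp)).1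
  have hPcard : P.card = t + 1 := by rw [hP, h2.2, hc2]
  have havail : r - (t + 1) ≤ (Finset.Icc 1 n \ P).card := by
    rw [Finset.card_sdiff_of_subset hPsub, hPcard, Nat.card_Icc]
    omega
  obtain ⟨X, hXsub, hXcard⟩ := Finset.exists_subset_card_eq havail
  set f : ℕ → ℕ × ℕ := fun x => (x, if (x, 1) ∈ T1 then 2 else 1) with hf
  have hfinj : Function.Injective f := fun a b h => congrArg Prod.fst h
  set A : Finset (ℕ × ℕ) := T2 ∪ X.image f with hA
  have hdisj : Disjoint T2 (X.image f) := by
    rw [Finset.disjoint_left]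
    intro p hp hp'
    obtain ⟨x, hx, rfl⟩ := Finset.mem_image.mp hp'
    have : x ∈ P := Finset.mem_image_of_mem Prod.fst hp
    exact (Finset.mem_sdiff.mp (hXsub hx)).2 this
  have himgf : (X.image f).image Prod.fst = X := by
    rw [Finset.image_image]
    have : Prod.fst ∘ f = id := funext fun x => rfl
    rw [this, Finset.image_id]
  have hAcard : A.card = r := by
    rw [hA, Finset.card_union_of_disjoint hdisj, hc2,
      Finset.card_image_of_injective _ hfinj, hXcard]
    omega
  have hAbox : A ⊆ box n k := by
    rw [hA]
    apply Finset.union_subset h2.1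
    intro p hp
    obtain ⟨x, hx, rfl⟩ := Finset.mem_image.mp hp
    have hxn : x ∈ Finset.Icc 1 n := (Finset.mem_sdiff.mp (hXsub hx)).1
    refine Finset.mem_product.mpr ⟨hxn, Finset.mem_Icc.mpr ?_⟩
    by_cases h : (x, 1) ∈ T1 <;> simp [hf, h] <;> omega
  have hAimg : (A.image Prod.fst).card = r := by
    rw [hA, Finset.image_union, himgf]
    have hdisj2 : Disjoint P X := by
      rw [Finset.disjoint_left]
      intro x hx hx'
      exact (Finset.mem_sdiff.mp (hXsub hx')).2 hx
    rw [← hP, Finset.card_union_of_disjoint hdisj2, hPcard, hXcard]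
    omega
  refine ⟨A, mem_L_iff.mpr ⟨hAbox, hAcard, hAimg⟩, Finset.subset_union_left, ?_⟩
  intro p hp
  obtain ⟨hpA, hpT1⟩ := Finset.mem_inter.mp hp
  rcases Finset.mem_union.mp hpA with h | h
  · exact h
  · exfalso
    obtain ⟨x, hx, rfl⟩ := Finset.mem_image.mp h
    by_cases hx1 : (x, 1) ∈ T1
    · have h2mem : (x, 2) ∈ T1 := by simpa [hf, hx1] using hpT1
      have := Finset.card_image_iff.mp h1.2 hx1 h2mem rfl
      simp at this
    · have h1mem : (x, 1) ∈ T1 := by simpa [hf, hx1] using hpT1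
      exact hx1 h1mem

/-- Two minimum `t`-covers of a maximal `t`-intersecting family intersect in `≥ t` points. -/
lemma covers_intersect (n r k t : ℕ) (hk : 2 ≤ k) (htr : t + 1 ≤ r) (hrn : r ≤ n)
    (F : Finset (Finset (ℕ × ℕ))) (hF : IsMaximalTIntersecting n r k t F)
    {T1 T2 : Finset (ℕ × ℕ)} (h1 : IsTCover n k t F T1) (h2 : IsTCover n k t F T2)
    (hc2 : T2.card = t + 1) : t ≤ (T1 ∩ T2).card := by
  obtain ⟨A, hAL, hTA, hAT⟩ := exists_ext n r k t hk htr hrn T1 T2 h1.1 h2.1 hc2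
  have hAF : A ∈ F := by
    have hsubL : insert A F ⊆ L n r k := by
      intro B hB
      rcases Finset.mem_insert.mp hB with rfl | hB
      · exact hAL
      · exact hF.1 hB
    have hint : IsTIntersecting t (insert A F) := by
      have hAB : ∀ B ∈ F, t ≤ (A ∩ B).card := by
        intro B hB
        calc t ≤ (T2 ∩ B).card := h2.2 B hB
          _ ≤ (A ∩ B).card :=
            Finset.card_le_card (Finset.inter_subset_inter hTA (Finset.Subset.refl B))
      intro X hX Y hY
      rcases Finset.mem_insert.mp hX with hXA | hX
      · rcases Finset.mem_insert.mp hY with hYA | hY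
        · rw [hXA, hYA, Finset.inter_self, (mem_L_iff.mp hAL).2.1]; omega
        · rw [hXA]; exact hAB Y hY
      · rcases Finset.mem_insert.mp hY with hYA | hY
        · rw [hYA, Finset.inter_comm]; exact hAB X hX
        · exact hF.2.1 X hX Y hY
    have hG := hF.2.2 (insert A F) hsubL hint (Finset.subset_insert A F)
    rw [← hG]
    exact Finset.mem_insert_self A F
  calc t ≤ (T1 ∩ A).card := h1.2 A hAF
    _ ≤ (T1 ∩ T2).card := by
        apply Finset.card_le_card
        intro p hp
        obtain ⟨hp1, hpA⟩ := Finset.mem_inter.mp hp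
        exact Finset.mem_inter.mpr ⟨hp1, hAT (Finset.mem_inter.mpr ⟨hpA, hp1⟩)⟩

lemma key_bound {t : ℕ} {T1 T2 T3 X : Finset (ℕ × ℕ)}
    (hT3sub : T3 ⊆ T1 ∪ T2) (hS3 : (T1 ∩ T2 ∩ T3).card < t)
    (h1 : t ≤ (X ∩ T1).card) (h2 : t ≤ (X ∩ T2).card) (h3 : t ≤ (X ∩ T3).card) :
    t + 1 ≤ (X ∩ (T1 ∪ T2)).card := by
  by_contra h
  push_neg at h
  have hle : (X ∩ (T1 ∪ T2)).card ≤ t := by omega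
  have e1 : X ∩ T1 = X ∩ (T1 ∪ T2) :=
    Finset.eq_of_subset_of_card_le
      (Finset.inter_subset_inter (Finset.Subset.refl X) Finset.subset_union_left) (le_trans hle h1)
  have e2 : X ∩ T2 = X ∩ (T1 ∪ T2) :=
    Finset.eq_of_subset_of_card_le
      (Finset.inter_subset_inter (Finset.Subset.refl X) Finset.subset_union_right) (le_trans hle h2)
  have e3 : X ∩ T3 = X ∩ (T1 ∪ T2) :=
    Finset.eq_of_subset_of_card_le
      (Finset.inter_subset_inter (Finset.Subset.refl X) hT3sub) (le_trans hle h3)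
  have hsub : X ∩ (T1 ∪ T2) ⊆ T1 ∩ T2 ∩ T3 := by
    intro p hp
    have p1 : p ∈ X ∩ T1 := e1 ▸ hp
    have p2 : p ∈ X ∩ T2 := e2 ▸ hp
    have p3 : p ∈ X ∩ T3 := e3 ▸ hp
    exact Finset.mem_inter.mpr ⟨Finset.mem_inter.mpr
      ⟨(Finset.mem_inter.mp p1).2, (Finset.mem_inter.mp p2).2⟩, (Finset.mem_inter.mp p3).2⟩
  have := Finset.card_le_card hsub
  have h1' : t ≤ (X ∩ (T1 ∪ T2)).card := e1 ▸ h1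
  omega

lemma diff_subset_third {t : ℕ} {T1 T2 T3 : Finset (ℕ × ℕ)}
    (hc1 : T1.card = t + 1) (h12 : (T1 ∩ T2).card = t)
    (h31 : t ≤ (T3 ∩ T1).card) (hlt : (T1 ∩ T2 ∩ T3).card < t) : T1 \ T2 ⊆ T3 := by
  intro p hp
  by_contra hpT3
  have hsub : T3 ∩ T1 ⊆ T1 ∩ T2 ∩ T3 := by
    intro q hq
    obtain ⟨hq3, hq1⟩ := Finset.mem_inter.mp hq
    by_cases hq2 : q ∈ T2
    · exact Finset.mem_inter.mpr ⟨Finset.mem_inter.mpr ⟨hq1, hq2⟩, hq3⟩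
    · exfalso
      have hcard : (T1 \ T2).card = 1 := by
        have := Finset.card_sdiff_add_card_inter T1 T2
        omega
      have : q = p := Finset.card_le_one.mp (le_of_eq hcard)
        q (Finset.mem_sdiff.mpr ⟨hq1, hq2⟩) p hp
      exact hpT3 (this ▸ hq3)
  have := Finset.card_le_card hsub
  omega

end Aux

theorem union_of_covers_case1 (n r k t : ℕ) (hn : 0 < n) (ht : 0 < t)
    (hk : 2 ≤ k) (htr : t + 1 ≤ r) (hrn : r ≤ n)
    (F : Finset (Finset (ℕ × ℕ))) (hF : IsMaximalTIntersecting n r k t F)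
    (hex : ∃ T, IsTCover n k t F T ∧ T.card = t + 1)
    (hmin : ∀ T, IsTCover n k t F T → t + 1 ≤ T.card)
    (hTau : ∀ S, IsTCover n k t (TauSet n k t F) S → t + 1 ≤ S.card) :
    IsSigned n k ((TauSet n k t F).sup id) ∧ ((TauSet n k t F).sup id).card = t + 2 ∧
      ∀ A ∈ F, t + 1 ≤ (A ∩ (TauSet n k t F).sup id).card := by
  classical
  -- Get T1 ∈ TauSet
  obtain ⟨T1, hT1cov, hT1c⟩ := hex
  have hT1mem : T1 ∈ TauSet n k t F := mem_TauSet_iff.mpr ⟨hT1cov, hT1c⟩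
  -- Get a t-subset S1 of T1; it is not a t-cover of TauSet, giving T2 with small intersection
  obtain ⟨S1, hS1sub, hS1card⟩ := Finset.exists_subset_card_eq (s := T1) (n := t) (by omega)
  have hS1signed : IsSigned n k S1 := signed_subset hT1cov.1 hS1sub
  have hnc1 : ¬ IsTCover n k t (TauSet n k t F) S1 := by
    intro hc
    have := hTau S1 hc
    omega
  obtain ⟨T2, hT2mem, hT2small⟩ : ∃ T2 ∈ TauSet n k t F, (S1 ∩ T2).card < t := by
    by_contra h
    push_neg at h
    exact hnc1 ⟨hS1signed, h⟩
  obtain ⟨hT2cov, hT2c⟩ := mem_TauSet_iff.mp hT2mem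
  have hne : T1 ≠ T2 := by
    intro h
    subst h
    have : S1 ∩ T1 = S1 := Finset.inter_eq_left.mpr hS1sub
    rw [this, hS1card] at hT2small
    omega
  -- T1 ∩ T2 has card exactly t
  have hCI := covers_intersect n r k t hk htr hrn F hF hT1cov hT2cov hT2c
  have h12 : (T1 ∩ T2).card = t := by
    by_contra h
    have h' : t + 1 ≤ (T1 ∩ T2).card := by omega
    have e : T1 ∩ T2 = T1 :=
      Finset.eq_of_subset_of_card_le Finset.inter_subset_left (by omega)
    have : T1 ⊆ T2 := by rw [← e]; exact Finset.inter_subset_right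
    exact hne (Finset.eq_of_subset_of_card_le this (by omega))
  -- T1 ∩ T2 is not a cover of TauSet, giving T3
  have hSsigned : IsSigned n k (T1 ∩ T2) := signed_subset hT1cov.1 Finset.inter_subset_left
  have hnc2 : ¬ IsTCover n k t (TauSet n k t F) (T1 ∩ T2) := by
    intro hc
    have := hTau _ hc
    omega
  obtain ⟨T3, hT3mem, hT3small⟩ : ∃ T3 ∈ TauSet n k t F, (T1 ∩ T2 ∩ T3).card < t := by
    by_contra h
    push_neg at h
    exact hnc2 ⟨hSsigned, h⟩
  obtain ⟨hT3cov, hT3c⟩ := mem_TauSet_iff.mp hT3mem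
  have h31 : t ≤ (T3 ∩ T1).card := covers_intersect n r k t hk htr hrn F hF hT3cov hT1cov hT1c
  have h32 : t ≤ (T3 ∩ T2).card := covers_intersect n r k t hk htr hrn F hF hT3cov hT2cov hT2c
  -- T3 ⊆ T1 ∪ T2
  have hT3sub : T3 ⊆ T1 ∪ T2 := by
    have hunion : T3 ∩ (T1 ∪ T2) = (T3 ∩ T1) ∪ (T3 ∩ T2) := Finset.inter_union_distrib_left T3 T1 T2
    have hii : (T3 ∩ T1) ∩ (T3 ∩ T2) = T1 ∩ T2 ∩ T3 := by
      ext p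
      simp only [Finset.mem_inter]
      tauto
    have hcu := Finset.card_union_add_card_inter (T3 ∩ T1) (T3 ∩ T2)
    rw [hii] at hcu
    have hbig : t + 1 ≤ (T3 ∩ (T1 ∪ T2)).card := by
      rw [hunion]
      omega
    have hle : (T3 ∩ (T1 ∪ T2)).card ≤ t + 1 := by
      calc (T3 ∩ (T1 ∪ T2)).card ≤ T3.card := Finset.card_le_card Finset.inter_subset_left
        _ = t + 1 := hT3c
    have : T3 ∩ (T1 ∪ T2) = T3 :=
      Finset.eq_of_subset_of_card_le Finset.inter_subset_left (by omega)
    exact Finset.inter_eq_left.mp this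
  -- diff subsets
  have hd1 : T1 \ T2 ⊆ T3 := diff_subset_third hT1c h12 h31 hT3small
  have hd2 : T2 \ T1 ⊆ T3 := by
    have h12' : (T2 ∩ T1).card = t := by rw [Finset.inter_comm]; exact h12
    have hlt' : (T2 ∩ T1 ∩ T3).card < t := by
      rw [Finset.inter_comm T2 T1]; exact hT3small
    exact diff_subset_third hT2c h12' h32 hlt'
  -- M = T1 ∪ T2
  have hMcard : (T1 ∪ T2).card = t + 2 := by
    have := Finset.card_union_add_card_inter T1 T2
    omega
  -- every member of TauSet is contained in M
  have hTsubM : ∀ T ∈ TauSet n k t F, T ⊆ T1 ∪ T2 := by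
    intro T hTm
    obtain ⟨hTcov, hTc⟩ := mem_TauSet_iff.mp hTm
    have i1 : t ≤ (T ∩ T1).card := covers_intersect n r k t hk htr hrn F hF hTcov hT1cov hT1c
    have i2 : t ≤ (T ∩ T2).card := covers_intersect n r k t hk htr hrn F hF hTcov hT2cov hT2c
    have i3 : t ≤ (T ∩ T3).card := covers_intersect n r k t hk htr hrn F hF hTcov hT3cov hT3c
    have hkb := key_bound hT3sub hT3small i1 i2 i3
    have hle : (T ∩ (T1 ∪ T2)).card ≤ t + 1 := by
      calc (T ∩ (T1 ∪ T2)).card ≤ T.card := Finset.card_le_card Finset.inter_subset_left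
        _ = t + 1 := hTc
    have : T ∩ (T1 ∪ T2) = T :=
      Finset.eq_of_subset_of_card_le Finset.inter_subset_left (by omega)
    exact Finset.inter_eq_left.mp this
  have hsup : (TauSet n k t F).sup id = T1 ∪ T2 := by
    apply le_antisymm
    · exact Finset.sup_le fun T hT => hTsubM T hT
    · have l1 : T1 ≤ (TauSet n k t F).sup id := Finset.le_sup (f := id) hT1mem
      have l2 : T2 ≤ (TauSet n k t F).sup id := Finset.le_sup (f := id) hT2mem
      exact Finset.union_subset l1 l2
  rw [hsup]
  -- M is signed
  have hMsigned : IsSigned n k (T1 ∪ T2) := by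
    refine ⟨Finset.union_subset hT1cov.1.1 hT2cov.1.1, ?_⟩
    rw [Finset.card_image_iff]
    intro p hp q hq hpq
    simp only [Finset.coe_union, Set.mem_union, Finset.mem_coe] at hp hq
    have inj1 := Finset.card_image_iff.mp hT1cov.1.2
    have inj2 := Finset.card_image_iff.mp hT2cov.1.2
    have inj3 := Finset.card_image_iff.mp hT3cov.1.2
    rcases hp with hp1 | hp2 <;> rcases hq with hq1 | hq2
    · exact inj1 hp1 hq1 hpq
    · by_cases hp2' : p ∈ T2
      · exact inj2 hp2' hq2 hpq
      · by_cases hq1' : q ∈ T1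
        · exact inj1 hp1 hq1' hpq
        · exact inj3 (hd1 (Finset.mem_sdiff.mpr ⟨hp1, hp2'⟩))
            (hd2 (Finset.mem_sdiff.mpr ⟨hq2, hq1'⟩)) hpq
    · by_cases hq2' : q ∈ T2
      · exact inj2 hp2 hq2' hpq
      · by_cases hp1' : p ∈ T1
        · exact inj1 hp1' hq1 hpq
        · exact inj3 (hd2 (Finset.mem_sdiff.mpr ⟨hp2, hp1'⟩))
            (hd1 (Finset.mem_sdiff.mpr ⟨hq1, hq2'⟩)) hpq
    · exact inj2 hp2 hq2 hpq
  refine ⟨hMsigned, hMcard, ?_⟩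
  intro A hA
  exact key_bound hT3sub hT3small
    (Finset.inter_comm A T1 ▸ hT1cov.2 A hA)
    (Finset.inter_comm A T2 ▸ hT2cov.2 A hA)
    (Finset.inter_comm A T3 ▸ hT3cov.2 A hA)
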